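/- Fix L > 0, n ≥ 1 and positive step sizes γ_0, …, γ_{n−1} > 0. Let h_L : ℝ → ℝ be the Huber function h_L(x) = (L/2)x² if |x| ≤ 1 and h_L(x) = L|x| − L/2 if |x| > 1; h_L is convex and L-QG+ with minimizer set {0} and minimum value 0. Set x_0 = 1 + 2·∑_{k=0}^{n−1} L·γ_k and define x_{k+1} = x_k − γ_k·L for 0 ≤ k ≤ n−1. Then x_k ≥ 1 for all 0 ≤ k ≤ n (so L is a subgradient of h_L at each x_k with k < n), and h_L(x_n) − 0 ≥ (L/2)·d(x_0, {0})² / (1 + 2·∑_{k=0}^{n−1} L·γ_k). -/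

import Mathlib

theorem huber_lower_bound_varying_steps
    (L : ℝ) (hL : 0 < L) (n : ℕ) (hn : 1 ≤ n)
    (γ : ℕ → ℝ) (hγ : ∀ k < n, 0 < γ k)
    (h : ℝ → ℝ)
    (hdef : ∀ z, h z = if |z| ≤ 1 then L / 2 * z ^ 2 else L * |z| - L / 2)
    (x : ℕ → ℝ) (hx0 : x 0 = 1 + 2 * ∑ k ∈ Finset.range n, L * γ k)
    (hupd : ∀ k < n, x (k + 1) = x k - γ k * L) :
    ConvexOn ℝ Set.univ h ∧
    {z | ∀ y, h z ≤ h y} = {0} ∧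
    h 0 = 0 ∧
    (∀ z, h z - 0 ≤ L / 2 * Metric.infDist z ({0} : Set ℝ) ^ 2) ∧
    (∀ k ≤ n, 1 ≤ x k) ∧
    (∀ k < n, ∀ y, h y ≥ h (x k) + L * (y - x k)) ∧
    h (x n) - 0 ≥ L / 2 * Metric.infDist (x 0) ({0} : Set ℝ) ^ 2
        / (1 + 2 * ∑ k ∈ Finset.range n, L * γ k) := by
  -- tangent inequality with clamped slope
  have tangent : ∀ v y : ℝ, h y ≥ h v + L * (max (-1) (min v 1)) * (y - v) := by
    intro v y
    rw [hdef v, hdef y]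
    rcases le_or_gt (|v|) 1 with hv | hv
    · have hv1 : -1 ≤ v := (abs_le.mp hv).1
      have hv2 : v ≤ 1 := (abs_le.mp hv).2
      have hc : max (-1) (min v 1) = v := by
        rw [min_eq_left hv2, max_eq_right hv1]
      rw [hc, if_pos hv]
      rcases le_or_gt (|y|) 1 with hy | hy
      · rw [if_pos hy]; nlinarith [sq_nonneg (y - v)]
      · rw [if_neg (not_le.mpr hy)]
        have h1 : -|y| ≤ y := neg_abs_le y
        have h2 : y ≤ |y| := le_abs_self y
        have h3 : -|v| ≤ v := neg_abs_le v
        have h4 : v ≤ |v| := le_abs_self v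
        have hvy : v * y ≤ |v| * |y| := by
          rw [← abs_mul]; exact le_abs_self _
        have p1 : 0 ≤ (1 - |v|) * (|y| - (1 + |v|) / 2) :=
          mul_nonneg (by linarith) (by linarith)
        nlinarith [mul_nonneg hL.le p1, sq_abs v,
          mul_le_mul_of_nonneg_left hvy hL.le]
    · rw [if_neg (not_le.mpr hv)]
      rcases le_or_gt 1 v with hv1 | hv1
      · have hva : |v| = v := abs_of_nonneg (by linarith)
        have hc : max (-1) (min v 1) = 1 := by
          rw [min_eq_right hv1]; norm_num
        rw [hc, hva]
        rcases le_or_gt (|y|) 1 with hy | hy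
        · rw [if_pos hy]; nlinarith [sq_nonneg (y - 1), le_abs_self y, abs_le.mp hy]
        · rw [if_neg (not_le.mpr hy)]
          have := le_abs_self y
          nlinarith
      · have hv2 : v < -1 := by
          rcases abs_cases v with ⟨h1, _⟩ | ⟨h1, _⟩ <;> linarith
        have hva : |v| = -v := abs_of_neg (by linarith)
        have hc : max (-1) (min v 1) = -1 := by
          rw [min_eq_left (by linarith), max_eq_left (by linarith)]
        rw [hc, hva]
        rcases le_or_gt (|y|) 1 with hy | hy
        · rw [if_pos hy]; nlinarith [sq_nonneg (y + 1), neg_abs_le y, abs_le.mp hy]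
        · rw [if_neg (not_le.mpr hy)]
          have := neg_abs_le y
          nlinarith
  have hnn : ∀ z, 0 ≤ h z := by
    intro z
    rw [hdef z]
    split_ifs with hz
    · positivity
    · push_neg at hz
      nlinarith [abs_nonneg z]
  have h0 : h 0 = 0 := by rw [hdef 0]; norm_num
  have hconv : ConvexOn ℝ Set.univ h := by
    refine ⟨convex_univ, ?_⟩
    intro p _ q _ a b ha hb hab
    have hb' : b = 1 - a := by linarith
    subst hb'
    simp only [smul_eq_mul]
    have t1 := tangent (a * p + (1 - a) * q) p
    have t2 := tangent (a * p + (1 - a) * q) q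
    set c := max (-1) (min (a * p + (1 - a) * q) 1) with hc
    nlinarith [mul_le_mul_of_nonneg_left t1 ha,
      mul_le_mul_of_nonneg_left t2 (by linarith : (0:ℝ) ≤ 1 - a)]
  -- minimizer set
  have hmin : {z | ∀ y, h z ≤ h y} = {0} := by
    ext z
    simp only [Set.mem_setOf_eq, Set.mem_singleton_iff]
    constructor
    · intro hz
      have hz0 : h z ≤ 0 := by simpa [h0] using hz 0
      have hzz : h z = 0 := le_antisymm hz0 (hnn z)
      rw [hdef z] at hzz
      split_ifs at hzz with hb
      · have : z ^ 2 = 0 := by nlinarith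
        exact pow_eq_zero_iff (n := 2) (by norm_num) |>.mp this
      · push_neg at hb
        nlinarith
    · intro hz
      subst hz
      intro y
      rw [h0]; exact hnn y
  -- QG+
  have hqg : ∀ z, h z - 0 ≤ L / 2 * Metric.infDist z ({0} : Set ℝ) ^ 2 := by
    intro z
    rw [Metric.infDist_singleton, Real.dist_eq, sub_zero, sub_zero, hdef z]
    split_ifs with hz
    · rw [sq_abs]
    · push_neg at hz
      nlinarith [mul_nonneg hL.le (sq_nonneg (|z| - 1))]
  -- closed form for x
  set S := ∑ k ∈ Finset.range n, L * γ k with hS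
  have hSpos : 0 < S := by
    apply Finset.sum_pos
    · intro k hk
      exact mul_pos hL (hγ k (Finset.mem_range.mp hk))
    · exact ⟨0, Finset.mem_range.mpr hn⟩
  have hxk : ∀ k ≤ n, x k = x 0 - ∑ j ∈ Finset.range k, L * γ j := by
    intro k hk
    induction k with
    | zero => simp
    | succ m ih =>
      rw [hupd m (by omega), ih (by omega), Finset.sum_range_succ]
      ring
  have hge1 : ∀ k ≤ n, 1 ≤ x k := by
    intro k hk
    rw [hxk k hk, hx0]
    have hsub : ∑ j ∈ Finset.range k, L * γ j ≤ S := by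
      rw [hS]
      apply Finset.sum_le_sum_of_subset_of_nonneg
      · exact Finset.range_subset_range.mpr hk
      · intro i hi _
        exact le_of_lt (mul_pos hL (hγ i (Finset.mem_range.mp hi)))
    linarith
  refine ⟨hconv, hmin, h0, hqg, hge1, ?_, ?_⟩
  · intro k hk y
    have hxk1 := hge1 k (le_of_lt hk)
    have := tangent (x k) y
    have hc : max (-1) (min (x k) 1) = 1 := by
      rw [min_eq_right hxk1]; norm_num
    rw [hc, mul_one] at this
    exact this
  · have hxn : x n = 1 + S := by
      rw [hxk n le_rfl, hx0]
      ring
    have hhxn : h (x n) = L * (1 + S) - L / 2 := by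
      rw [hdef (x n), hxn, if_neg, abs_of_pos (by linarith)]
      rw [abs_of_pos (by linarith)]
      push_neg
      linarith
    have hx0abs : Metric.infDist (x 0) ({0} : Set ℝ) = 1 + 2 * S := by
      rw [Metric.infDist_singleton, Real.dist_eq, sub_zero, hx0,
        abs_of_pos (by linarith)]
    rw [hhxn, hx0abs]
    have hne : (1 : ℝ) + 2 * S ≠ 0 := by linarith
    have : L / 2 * (1 + 2 * S) ^ 2 / (1 + 2 * S) = L / 2 * (1 + 2 * S) := by
      field_simp
    rw [this]
    linarith
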